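/- Let X ⊂ ℝⁿ be a nonempty convex compact set with symmetrization X_s = (1/2)(X − X), A an m×n matrix, B a ν×n matrix, ‖·‖ a norm on ℝ^ν with conjugate unit ball B_*. Let X ∈ S^n, t ≥ 0 satisfy zᵀXz ≤ t for all z ∈ X_s; let U ∈ S^ν, s' ≥ 0 satisfy uᵀUu ≤ s' for all u ∈ B_*; let H = [h₁,…,h_N] be an m×N matrix and λ ∈ ℝ^N₊ with Θ = H Diag(λ) Hᵀ and Σ_ℓ λ_ℓ ≤ μ. If the symmetric (ν+n)×(ν+n) block matrix with blocks [U, (1/2)B; (1/2)Bᵀ, AᵀΘA + X] is positive semidefinite, then 𝔐[H] := max{‖Bz‖ : z ∈ 2X_s, ‖HᵀAz‖_∞ ≤ 2} ≤ 2(t + s' + μ). -/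

import Mathlib

open Matrix

/-- risk bound used in Proposition on the second design: if
`zᵀXz ≤ t` on `X_s`, `uᵀUu ≤ s'` on the conjugate unit ball `B_*`,
`Θ = H Diag(λ) Hᵀ` with `λ ≥ 0`, `Σλ ≤ μ`, and the block matrix
`[U, ½B; ½Bᵀ, AᵀΘA + X]` is PSD, then
`𝔐[H] = max{‖Bz‖ : z ∈ 2X_s, ‖HᵀAz‖_∞ ≤ 2} ≤ 2(t + s' + μ)`. -/
theorem stmt10
    {n m ν N : ℕ}
    (Xset : Set (Fin n → ℝ)) (hXne : Xset.Nonempty) (hXconv : Convex ℝ Xset)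
    (hXcomp : IsCompact Xset)
    (A : Matrix (Fin m) (Fin n) ℝ) (B : Matrix (Fin ν) (Fin n) ℝ)
    (nrm : (Fin ν → ℝ) → ℝ)
    (nrm_add : ∀ u v, nrm (u + v) ≤ nrm u + nrm v)
    (nrm_smul : ∀ (c : ℝ) u, nrm (c • u) = |c| * nrm u)
    (nrm_eq_zero : ∀ u, nrm u = 0 ↔ u = 0)
    (nrmStar : (Fin ν → ℝ) → ℝ)
    (hnrmStar : ∀ u, nrmStar u = sSup ((fun y => u ⬝ᵥ y) '' {y | nrm y ≤ 1}))
    (X : Matrix (Fin n) (Fin n) ℝ) (hXsymm : X.IsSymm) (t : ℝ) (ht : 0 ≤ t)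
    (hXt : ∀ x ∈ Xset, ∀ y ∈ Xset,
      ((2⁻¹ : ℝ) • (x - y)) ⬝ᵥ X.mulVec ((2⁻¹ : ℝ) • (x - y)) ≤ t)
    (U : Matrix (Fin ν) (Fin ν) ℝ) (hUsymm : U.IsSymm) (s' : ℝ) (hs' : 0 ≤ s')
    (hUs : ∀ u : Fin ν → ℝ, nrmStar u ≤ 1 → u ⬝ᵥ U.mulVec u ≤ s')
    (H : Matrix (Fin m) (Fin N) ℝ) (lam : Fin N → ℝ) (hlam : ∀ ℓ, 0 ≤ lam ℓ)
    (Θ : Matrix (Fin m) (Fin m) ℝ) (hΘ : Θ = H * Matrix.diagonal lam * Hᵀ)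
    (μ : ℝ) (hμ : ∑ ℓ, lam ℓ ≤ μ)
    (hblock : (Matrix.fromBlocks U ((2⁻¹ : ℝ) • B) ((2⁻¹ : ℝ) • Bᵀ)
        (Aᵀ * Θ * A + X)).PosSemidef) :
    ∀ x ∈ Xset, ∀ y ∈ Xset,
      ‖Hᵀ.mulVec (A.mulVec (x - y))‖ ≤ 2 →
      nrm (B.mulVec (x - y)) ≤ 2 * (t + s' + μ) := by
  intro x hx y hy hHz
  set z : Fin n → ℝ := x - y with hzdef
  have hnrm0 : nrm 0 = 0 := (nrm_eq_zero 0).2 rfl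
  have hnrm_nonneg : ∀ u, 0 ≤ nrm u := by
    intro u
    have h2 : nrm (-u) = nrm u := by
      have := nrm_smul (-1) u
      simpa using this
    have h1 := nrm_add u (-u)
    rw [add_neg_cancel, hnrm0, h2] at h1
    linarith
  have hμ0 : 0 ≤ μ := le_trans (Finset.sum_nonneg fun ℓ _ => hlam ℓ) hμ
  -- key inequality
  have key : ∀ u : Fin ν → ℝ, nrmStar u ≤ 1 → u ⬝ᵥ B.mulVec z ≤ 2 * (t + s' + μ) := by
    intro u hu
    set z₁ : Fin n → ℝ := (2⁻¹ : ℝ) • z with hz1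
    have hpsd := hblock.dotProduct_mulVec_nonneg (Sum.elim (-u) z₁)
    rw [Matrix.fromBlocks_mulVec] at hpsd
    have hstar : star (Sum.elim (-u) z₁) = Sum.elim (-u) z₁ := rfl
    rw [hstar, sumElim_dotProduct_sumElim] at hpsd
    simp only [Sum.elim_comp_inl, Sum.elim_comp_inr] at hpsd
    have h1 : z₁ ⬝ᵥ Bᵀ *ᵥ u = u ⬝ᵥ B *ᵥ z₁ := by
      rw [Matrix.dotProduct_mulVec, Matrix.vecMul_transpose, dotProduct_comm]
    have hexp : (-u) ⬝ᵥ (U *ᵥ (-u) + ((2⁻¹ : ℝ) • B) *ᵥ z₁)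
        + z₁ ⬝ᵥ (((2⁻¹ : ℝ) • Bᵀ) *ᵥ (-u) + (Aᵀ * Θ * A + X) *ᵥ z₁)
        = u ⬝ᵥ U *ᵥ u - u ⬝ᵥ B *ᵥ z₁
          + (z₁ ⬝ᵥ (Aᵀ * Θ * A) *ᵥ z₁ + z₁ ⬝ᵥ X *ᵥ z₁) := by
      simp only [Matrix.mulVec_neg, Matrix.smul_mulVec, Matrix.add_mulVec,
        dotProduct_add, neg_dotProduct, dotProduct_neg,
        dotProduct_smul, neg_neg, smul_eq_mul, h1]
      ring
    rw [hexp] at hpsd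
    -- the three bounds
    have hXb : z₁ ⬝ᵥ X *ᵥ z₁ ≤ t := hXt x hx y hy
    have hUb : u ⬝ᵥ U *ᵥ u ≤ s' := hUs u hu
    set v : Fin N → ℝ := Hᵀ *ᵥ (A *ᵥ z₁) with hv
    have hquad : z₁ ⬝ᵥ (Aᵀ * Θ * A) *ᵥ z₁ = ∑ ℓ, v ℓ * (lam ℓ * v ℓ) := by
      have hM : Aᵀ * Θ * A = (Hᵀ * A)ᵀ * (Matrix.diagonal lam * (Hᵀ * A)) := by
        rw [hΘ]
        simp only [Matrix.transpose_mul, Matrix.transpose_transpose]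
        simp only [Matrix.mul_assoc]
      rw [hM, ← Matrix.mulVec_mulVec, Matrix.dotProduct_mulVec, Matrix.vecMul_transpose,
        ← Matrix.mulVec_mulVec, Matrix.mulVec_mulVec]
      simp [dotProduct, Matrix.mulVec_diagonal, hv, ← Matrix.mulVec_mulVec]
    have hvb : ∀ ℓ, |v ℓ| ≤ 1 := by
      intro ℓ
      have h2 : v = (2⁻¹ : ℝ) • (Hᵀ *ᵥ (A *ᵥ z)) := by
        rw [hv, hz1, Matrix.mulVec_smul, Matrix.mulVec_smul]
      have h3 : |(Hᵀ *ᵥ (A *ᵥ z)) ℓ| ≤ 2 :=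
        le_trans (norm_le_pi_norm (Hᵀ *ᵥ (A *ᵥ z)) ℓ) hHz
      rw [h2]
      simp only [Pi.smul_apply, smul_eq_mul, abs_mul]
      rw [abs_of_pos (by norm_num : (0:ℝ) < 2⁻¹)]
      linarith
    have hΘb : z₁ ⬝ᵥ (Aᵀ * Θ * A) *ᵥ z₁ ≤ μ := by
      rw [hquad]
      refine le_trans (Finset.sum_le_sum fun ℓ _ => ?_) hμ
      have h4 : v ℓ * v ℓ ≤ 1 := by nlinarith [hvb ℓ, abs_nonneg (v ℓ), neg_abs_le (v ℓ), le_abs_self (v ℓ)]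
      have := hlam ℓ
      nlinarith
    have hhalf : u ⬝ᵥ B *ᵥ z = 2 * (u ⬝ᵥ B *ᵥ z₁) := by
      rw [hz1, Matrix.mulVec_smul]
      simp [smul_eq_mul]
    rw [hhalf]
    linarith
  -- conclude via Hahn–Banach duality
  by_cases hBz : B.mulVec z = 0
  · rw [hBz, hnrm0]; linarith
  · set w : Fin ν → ℝ := B.mulVec z with hw
    set f := LinearPMap.mkSpanSingleton (K := ℝ) (L := ℝ) (σ := RingHom.id ℝ) w (nrm w) hBz with hf
    have hfle : ∀ p : f.domain, f p ≤ nrm p := by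
      rintro ⟨p, hp⟩
      obtain ⟨c, rfl⟩ := Submodule.mem_span_singleton.1 hp
      calc (f ⟨c • w, hp⟩ : ℝ) = c • nrm w :=
            LinearPMap.mkSpanSingleton'_apply _ _ _ c hp
        _ ≤ nrm (c • w) := by
            rw [nrm_smul, smul_eq_mul]
            nlinarith [hnrm_nonneg w, le_abs_self c]
    obtain ⟨g, hg1, hg2⟩ := exists_extension_of_le_sublinear f nrm
      (fun c hc x => by rw [nrm_smul, abs_of_pos hc]) nrm_add hfle
    have hgw : g w = nrm w := by
      have h5 : (f ⟨w, Submodule.mem_span_singleton_self w⟩ : ℝ) = nrm w :=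
        LinearPMap.mkSpanSingleton_apply ℝ ℝ hBz (nrm w)
      exact (hg1 ⟨w, Submodule.mem_span_singleton_self w⟩).trans h5
    set u : Fin ν → ℝ := fun i => g (fun j => if i = j then 1 else 0) with hu
    have hgu : ∀ p, g p = u ⬝ᵥ p := by
      intro p
      rw [LinearMap.pi_apply_eq_sum_univ g p]
      simp [dotProduct, hu, smul_eq_mul, mul_comm]
    have hustar : nrmStar u ≤ 1 := by
      rw [hnrmStar]
      apply Real.sSup_le
      · rintro r ⟨yv, hyv, rfl⟩
        calc u ⬝ᵥ yv = g yv := (hgu yv).symm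
          _ ≤ nrm yv := hg2 yv
          _ ≤ 1 := hyv
      · norm_num
    calc nrm (B.mulVec z) = g w := hgw.symm
      _ = u ⬝ᵥ w := hgu w
      _ ≤ 2 * (t + s' + μ) := key u hustar
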